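/- For r ≥ 1, the symmetrized product ∑_{σ ∈ S_r} ∏_{k<s} (z_{σ(k)} - q^{-2} z_{σ(s)})(z_{σ(k)} - z_{σ(s)}) = q^{-r(r-1)/2} [r]!_q ∏_{k<s}(z_k - z_s)^2 in ℤ[q,q^{-1}][z_1,...,z_r]. -/

import Mathlib

open MvPolynomial Finset

noncomputable abbrev K17 : Type := RatFunc ℚ

noncomputable def q17 : K17 := RatFunc.X

noncomputable def qInt17 (m : ℕ) : K17 := (q17 ^ m - q17⁻¹ ^ m) / (q17 - q17⁻¹)

noncomputable def qFact17 (r : ℕ) : K17 := ∏ m ∈ Finset.Icc 1 r, qInt17 m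

lemma hq_ne : q17 ≠ 0 := RatFunc.X_ne_zero

lemma hqsq_ne_one : q17 ^ 2 ≠ 1 := by
  intro h
  have h2 : algebraMap (Polynomial ℚ) (RatFunc ℚ) (Polynomial.X ^ 2) =
      algebraMap (Polynomial ℚ) (RatFunc ℚ) 1 := by
    rw [map_pow, map_one, RatFunc.algebraMap_X]; exact h
  have h3 := RatFunc.algebraMap_injective ℚ h2
  have := congrArg (fun p => Polynomial.coeff p 2) h3
  simp [Polynomial.coeff_one] at this

lemma hq_sub_ne : q17 - q17⁻¹ ≠ 0 := by
  intro h
  have h1 := sub_eq_zero.mp h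
  have h2 : q17 ^ 2 = 1 := by
    rw [pow_two]; nth_rewrite 2 [h1]; exact mul_inv_cancel₀ hq_ne
  exact hqsq_ne_one h2

lemma ht_ne_one : (q17⁻¹ : K17) ^ 2 ≠ 1 := by
  intro h
  rw [inv_pow] at h
  exact hqsq_ne_one (inv_eq_one.mp h)

lemma qInt_rec (m : ℕ) : qInt17 (m + 1) = q17 * qInt17 m + q17⁻¹ ^ m := by
  have key : q17 ^ (m+1) - q17⁻¹^(m+1)
      = q17 * (q17^m - q17⁻¹^m) + q17⁻¹^m * (q17 - q17⁻¹) := by ring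
  rw [qInt17, qInt17, mul_div_assoc', div_add' _ _ _ hq_sub_ne, key]

lemma qInt_eq (m : ℕ) : qInt17 (m + 1) = q17 ^ m * ∑ k ∈ range (m + 1), (q17⁻¹ ^ 2) ^ k := by
  induction m with
  | zero => simp [qInt17, div_self hq_sub_ne]
  | succ m ih =>
    rw [qInt_rec, ih]
    conv_rhs => rw [Finset.sum_range_succ]
    have h1 : q17 * q17⁻¹ ^ 2 = q17⁻¹ := by
      rw [pow_two, ← mul_assoc, mul_inv_cancel₀ hq_ne, one_mul]
    have h2 : q17 ^ (m+1) * (q17⁻¹^2)^(m+1) = q17⁻¹^(m+1) := by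
      rw [← mul_pow, h1]
    linear_combination -h2


-- coeff of Lagrange basis at top degree
lemma coeff_lagrange_basis {F : Type*} [Field F] {n : ℕ} (v : Fin (n+1) → F)
    (hv : Function.Injective v) (i : Fin (n+1)) :
    (Lagrange.basis Finset.univ v i).coeff n = ∏ j ∈ univ.erase i, (v i - v j)⁻¹ := by
  have hvs : Set.InjOn v (univ : Finset (Fin (n+1))) := fun a _ b _ h => hv h
  have hdeg : (Lagrange.basis Finset.univ v i).natDegree = n := by
    rw [Lagrange.natDegree_basis hvs (mem_univ i)]
    simp
  have h3 : (Lagrange.basis Finset.univ v i).coeff n = (Lagrange.basis Finset.univ v i).leadingCoeff := by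
    rw [Polynomial.leadingCoeff, hdeg]
  rw [h3]
  unfold Lagrange.basis
  rw [Polynomial.leadingCoeff_prod]
  refine Finset.prod_congr rfl fun j hj => ?_
  have hij : v i ≠ v j := fun h => (mem_erase.mp hj).1 (hv h).symm
  unfold Lagrange.basisDivisor
  rw [Polynomial.leadingCoeff_mul, Polynomial.leadingCoeff_C, (Polynomial.monic_X_sub_C _).leadingCoeff, mul_one]

lemma lagrange_coeff_sum {F : Type*} [Field F] {n : ℕ} (v : Fin (n+1) → F)
    (hv : Function.Injective v) (P : Polynomial F) (hP : P.degree < n + 1) (hlc : P.coeff n = 1) :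
    ∑ i : Fin (n+1), P.eval (v i) * ∏ j ∈ univ.erase i, (v i - v j)⁻¹ = 1 := by
  have hvs : Set.InjOn v (univ : Finset (Fin (n+1))) := fun a _ b _ h => hv h
  have hdeg : P.degree < (univ : Finset (Fin (n+1))).card := by
    simpa using hP
  have h := Lagrange.eq_interpolate hvs hdeg
  have h2 := congrArg (fun p => Polynomial.coeff p n) h
  simp only [Lagrange.interpolate_apply] at h2
  rw [hlc] at h2
  rw [Polynomial.finset_sum_coeff] at h2
  rw [h2]
  refine Finset.sum_congr rfl fun i _ => ?_
  rw [Polynomial.coeff_C_mul, coeff_lagrange_basis v hv i]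

lemma prod_erase_zero {M : Type*} [CommMonoid M] {n : ℕ} (g : Fin (n+1) → M) :
    ∏ j ∈ (univ : Finset (Fin (n+1))).erase 0, g j = ∏ j : Fin n, g j.succ := by
  have hset : (univ : Finset (Fin (n+1))).erase 0
      = univ.map ⟨Fin.succ, Fin.succ_injective n⟩ := by
    ext j
    simp only [mem_erase, mem_univ, and_true, Finset.mem_map, Function.Embedding.coeFn_mk]
    constructor
    · intro hj
      obtain ⟨i, rfl⟩ := Fin.eq_succ_of_ne_zero hj
      exact ⟨i, trivial, rfl⟩
    · rintro ⟨i, _, rfl⟩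
      exact Fin.succ_ne_zero i
  rw [hset, Finset.prod_map]
  rfl

lemma prod_erase_succ {M : Type*} [CommMonoid M] {n : ℕ} (p : Fin n) (g : Fin (n+1) → M) :
    ∏ j ∈ (univ : Finset (Fin (n+1))).erase p.succ, g j
      = g 0 * ∏ q ∈ (univ : Finset (Fin n)).erase p, g q.succ := by
  have hset : (univ : Finset (Fin (n+1))).erase p.succ
      = insert 0 ((univ.erase p).map ⟨Fin.succ, Fin.succ_injective n⟩) := by
    ext j
    simp only [mem_erase, mem_univ, and_true, Finset.mem_insert, Finset.mem_map,
      Function.Embedding.coeFn_mk]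
    constructor
    · intro hj
      rcases eq_or_ne j 0 with rfl | hj0
      · exact Or.inl rfl
      · obtain ⟨i, rfl⟩ := Fin.eq_succ_of_ne_zero hj0
        exact Or.inr ⟨i, fun h => hj (by rw [h]), rfl⟩
    · rintro (rfl | ⟨i, hi, rfl⟩)
      · exact (Fin.succ_ne_zero p).symm
      · intro h
        exact hi (Fin.succ_injective n h)
  rw [hset, Finset.prod_insert, Finset.prod_map]
  · rfl
  · simp only [Finset.mem_map, Function.Embedding.coeFn_mk]
    rintro ⟨i, _, hi⟩
    exact Fin.succ_ne_zero i hi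

lemma key_lemma {F : Type*} [Field F] (t : F) (ht : t ≠ 1) {n : ℕ} (x : Fin n → F)
    (hinj : Function.Injective x) (h0 : ∀ i, x i ≠ 0) :
    ∑ p : Fin n, ∏ i ∈ univ.erase p, ((x p - t * x i) / (x p - x i))
      = ∑ k ∈ range n, t ^ k := by
  set v : Fin (n+1) → F := Fin.cons 0 x with hv
  have hv0 : v 0 = 0 := rfl
  have hvs : ∀ i : Fin n, v i.succ = x i := fun i => rfl
  have hvinj : Function.Injective v := by
    intro a b hab
    induction a using Fin.cases with
    | zero =>
      induction b using Fin.cases with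
      | zero => rfl
      | succ j => rw [hv0, hvs j] at hab; exact absurd hab.symm (h0 j)
    | succ i =>
      induction b using Fin.cases with
      | zero => rw [hv0, hvs i] at hab; exact absurd hab (h0 i)
      | succ j => rw [hvs i, hvs j] at hab; rw [hinj hab]
  set P : Polynomial F := Lagrange.nodal univ (fun i : Fin n => t * x i) with hP
  have hdeg : P.degree < n + 1 := by
    rw [hP, Lagrange.degree_nodal]
    simp only [card_univ, Fintype.card_fin]
    exact_mod_cast Nat.lt_succ_self n
  have hcoeff : P.coeff n = 1 := by
    have h1 : P.natDegree = n := by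
      rw [hP, Lagrange.natDegree_nodal]; simp
    have h2 : P.coeff n = P.leadingCoeff := by rw [Polynomial.leadingCoeff, h1]
    rw [h2]
    exact Lagrange.nodal_monic
  have hsum := lagrange_coeff_sum v hvinj P hdeg hcoeff
  rw [Fin.sum_univ_succ] at hsum
  -- the zero term
  have hterm0 : P.eval (v 0) * ∏ j ∈ univ.erase 0, (v 0 - v j)⁻¹ = t ^ n := by
    rw [hv0, prod_erase_zero (fun j => (0 - v j)⁻¹), hP, Lagrange.eval_nodal]
    simp only [hvs]
    rw [← Finset.prod_mul_distrib]
    have heach : ∀ i : Fin n, (0 - t * x i) * (0 - x i)⁻¹ = t := by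
      intro i
      rw [zero_sub, zero_sub, inv_neg, neg_mul_neg, mul_assoc,
        mul_inv_cancel₀ (h0 i), mul_one]
    rw [Finset.prod_congr rfl (fun i _ => heach i), Finset.prod_const, card_univ,
      Fintype.card_fin]
  have hterm : ∀ p : Fin n,
      P.eval (v p.succ) * ∏ j ∈ univ.erase p.succ, (v p.succ - v j)⁻¹
        = (1 - t) * ∏ i ∈ univ.erase p, ((x p - t * x i) / (x p - x i)) := by
    intro p
    rw [hvs p, prod_erase_succ p (fun j => (x p - v j)⁻¹), hP, Lagrange.eval_nodal,
      ← Finset.mul_prod_erase univ (fun i => x p - t * x i) (mem_univ p)]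
    rw [hv0, sub_zero]
    simp only [hvs]
    rw [mul_mul_mul_comm]
    have h1 : (x p - t * x p) * (x p)⁻¹ = 1 - t := by
      have h2 : x p - t * x p = (1 - t) * x p := by ring
      rw [h2, mul_assoc, mul_inv_cancel₀ (h0 p), mul_one]
    rw [h1, ← Finset.prod_mul_distrib]
    congr 1
    exact Finset.prod_congr rfl fun q hq => (div_eq_mul_inv _ _).symm
  rw [hterm0] at hsum
  have hS : ∑ p : Fin n, P.eval (v p.succ) * ∏ j ∈ univ.erase p.succ, (v p.succ - v j)⁻¹
      = (1 - t) * ∑ p : Fin n, ∏ i ∈ univ.erase p, ((x p - t * x i) / (x p - x i)) := by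
    rw [Finset.mul_sum]
    exact Finset.sum_congr rfl fun p _ => hterm p
  rw [hS] at hsum
  have hgeom : (1 - t) * ∑ k ∈ range n, t ^ k = 1 - t ^ n := by
    have hg := geom_sum_mul t n
    linear_combination -hg
  have h1t : (1 : F) - t ≠ 0 := sub_ne_zero.mpr (Ne.symm ht)
  apply mul_left_cancel₀ h1t
  rw [hgeom]
  linear_combination hsum


lemma prod_pairs_perm {M : Type*} [CommMonoid M] {n : ℕ} (σ : Equiv.Perm (Fin n))
    (h : Fin n → Fin n → M) (hsymm : ∀ a b, h a b = h b a) :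
    ∏ k : Fin n, ∏ s ∈ univ.filter (fun s => k < s), h (σ k) (σ s)
      = ∏ k : Fin n, ∏ s ∈ univ.filter (fun s => k < s), h k s := by
  rw [Finset.prod_sigma', Finset.prod_sigma']
  refine Finset.prod_bij'
    (fun a _ => if σ a.1 < σ a.2 then ⟨σ a.1, σ a.2⟩ else ⟨σ a.2, σ a.1⟩)
    (fun b _ => if σ⁻¹ b.1 < σ⁻¹ b.2 then ⟨σ⁻¹ b.1, σ⁻¹ b.2⟩ else ⟨σ⁻¹ b.2, σ⁻¹ b.1⟩)
    ?_ ?_ ?_ ?_ ?_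
  · rintro ⟨a1, a2⟩ ha
    simp only [mem_sigma, mem_univ, true_and, mem_filter] at ha ⊢
    split_ifs with hlt
    · exact hlt
    · exact lt_of_le_of_ne (not_lt.mp hlt)
        (fun he => absurd (σ.injective he) (ne_of_gt ha))
  · rintro ⟨b1, b2⟩ hb
    simp only [mem_sigma, mem_univ, true_and, mem_filter] at hb ⊢
    split_ifs with hlt
    · exact hlt
    · exact lt_of_le_of_ne (not_lt.mp hlt)
        (fun he => absurd (σ⁻¹.injective he) (ne_of_gt hb))
  · rintro ⟨a1, a2⟩ ha
    simp only [mem_sigma, mem_univ, true_and, mem_filter] at ha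
    dsimp only
    split_ifs with h1 h2 h3
    · simp
    · exfalso
      simp only [Equiv.Perm.coe_inv, Equiv.symm_apply_apply] at h2
      exact h2 ha
    · exfalso
      simp only [Equiv.Perm.coe_inv, Equiv.symm_apply_apply] at h3
      exact absurd (lt_trans ha h3) (lt_irrefl _)
    · simp
  · rintro ⟨b1, b2⟩ hb
    simp only [mem_sigma, mem_univ, true_and, mem_filter] at hb
    dsimp only
    split_ifs with h1 h2 h3
    · simp
    · exfalso
      simp only [Equiv.Perm.coe_inv, Equiv.apply_symm_apply] at h2
      exact h2 hb
    · exfalso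
      simp only [Equiv.Perm.coe_inv, Equiv.apply_symm_apply] at h3
      exact absurd (lt_trans hb h3) (lt_irrefl _)
    · simp
  · rintro ⟨a1, a2⟩ ha
    dsimp only
    split_ifs with h1
    · rfl
    · exact hsymm _ _


lemma filter_zero_lt_eq {n : ℕ} :
    (univ : Finset (Fin (n+1))).filter (fun s => 0 < s)
      = univ.map ⟨Fin.succ, Fin.succ_injective n⟩ := by
  ext j
  simp only [mem_filter, mem_univ, true_and, and_true, Finset.mem_map,
    Function.Embedding.coeFn_mk]
  constructor
  · intro hj
    obtain ⟨i, rfl⟩ := Fin.eq_succ_of_ne_zero (Fin.pos_iff_ne_zero.mp hj)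
    exact ⟨i, rfl⟩
  · rintro ⟨i, rfl⟩
    exact Fin.succ_pos i

lemma prod_filter_zero_lt {M : Type*} [CommMonoid M] {n : ℕ} (g : Fin (n+1) → M) :
    ∏ s ∈ (univ : Finset (Fin (n+1))).filter (fun s => 0 < s), g s
      = ∏ s : Fin n, g s.succ := by
  rw [filter_zero_lt_eq, Finset.prod_map]
  rfl

lemma filter_succ_lt_eq {n : ℕ} (k : Fin n) :
    (univ : Finset (Fin (n+1))).filter (fun s => k.succ < s)
      = (univ.filter (fun s => k < s)).map ⟨Fin.succ, Fin.succ_injective n⟩ := by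
  ext j
  simp only [mem_filter, mem_univ, true_and, and_true, Finset.mem_map,
    Function.Embedding.coeFn_mk]
  constructor
  · intro hj
    have hj0 : j ≠ 0 := by
      intro h; rw [h] at hj; exact absurd hj (Fin.not_lt_zero _)
    obtain ⟨i, rfl⟩ := Fin.eq_succ_of_ne_zero hj0
    exact ⟨i, Fin.succ_lt_succ_iff.mp hj, rfl⟩
  · rintro ⟨i, hi, rfl⟩
    exact Fin.succ_lt_succ_iff.mpr hi

lemma prod_filter_succ_lt {M : Type*} [CommMonoid M] {n : ℕ} (k : Fin n) (g : Fin (n+1) → M) :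
    ∏ s ∈ (univ : Finset (Fin (n+1))).filter (fun s => k.succ < s), g s
      = ∏ s ∈ (univ : Finset (Fin n)).filter (fun s => k < s), g s.succ := by
  rw [filter_succ_lt_eq, Finset.prod_map]
  rfl

lemma prod_swap_succ {M : Type*} [CommMonoid M] {n : ℕ} (p : Fin (n+1))
    (f : Fin (n+1) → M) :
    ∏ j : Fin n, f (Equiv.swap 0 p j.succ) = ∏ i ∈ univ.erase p, f i := by
  have h1 : ∏ j : Fin n, f (Equiv.swap 0 p j.succ)
      = ∏ j ∈ (univ : Finset (Fin (n+1))).erase 0, f (Equiv.swap 0 p j) := by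
    rw [show (univ : Finset (Fin (n+1))).erase 0
        = univ.map ⟨Fin.succ, Fin.succ_injective n⟩ from ?_]
    · rw [Finset.prod_map]; rfl
    · ext j
      simp only [mem_erase, mem_univ, and_true, true_and, Finset.mem_map,
        Function.Embedding.coeFn_mk]
      constructor
      · intro hj
        obtain ⟨i, rfl⟩ := Fin.eq_succ_of_ne_zero hj
        exact ⟨i, rfl⟩
      · rintro ⟨i, rfl⟩; exact Fin.succ_ne_zero i
  rw [h1]
  refine Finset.prod_bij' (fun j _ => Equiv.swap 0 p j) (fun i _ => Equiv.swap 0 p i)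
    ?_ ?_ ?_ ?_ ?_
  · intro j hj
    simp only [mem_erase, mem_univ, and_true] at hj ⊢
    intro h
    apply hj
    have := (Equiv.swap 0 p).injective (a₁ := j) (a₂ := 0)
    simp only [Equiv.swap_apply_left] at this
    exact this (by rw [h])
  · intro i hi
    simp only [mem_erase, mem_univ, and_true] at hi ⊢
    intro h
    apply hi
    have := (Equiv.swap 0 p).injective (a₁ := i) (a₂ := p)
    simp only [Equiv.swap_apply_right] at this
    exact this (by rw [h])
  · intro j _; exact Equiv.swap_apply_self _ _ _
  · intro i _; exact Equiv.swap_apply_self _ _ _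
  · intro j _; rfl


theorem field_main {F : Type*} [Field F] (t : F) (ht : t ≠ 1) :
    ∀ (n : ℕ) (x : Fin n → F), Function.Injective x → (∀ i, x i ≠ 0) →
    ∑ σ : Equiv.Perm (Fin n), ∏ k : Fin n, ∏ s ∈ univ.filter (fun s => k < s),
        ((x (σ k) - t * x (σ s)) / (x (σ k) - x (σ s)))
      = ∏ m ∈ Icc 1 n, ∑ j ∈ range m, t ^ j := by
  intro n
  induction n with
  | zero =>
    intro x _ _
    simp [Finset.Icc_eq_empty (by omega : ¬ (1:ℕ) ≤ 0)]
  | succ n ih =>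
    intro x hinj h0
    rw [← Equiv.sum_comp Equiv.Perm.decomposeFin.symm]
    rw [Fintype.sum_prod_type]
    have hstep : ∀ p : Fin (n+1), ∀ τ : Equiv.Perm (Fin n),
        (∏ k : Fin (n+1), ∏ s ∈ univ.filter (fun s => k < s),
          ((x (Equiv.Perm.decomposeFin.symm (p, τ) k) -
              t * x (Equiv.Perm.decomposeFin.symm (p, τ) s)) /
            (x (Equiv.Perm.decomposeFin.symm (p, τ) k) -
              x (Equiv.Perm.decomposeFin.symm (p, τ) s))))
        = (∏ i ∈ univ.erase p, ((x p - t * x i) / (x p - x i))) *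
          ∏ k : Fin n, ∏ s ∈ univ.filter (fun s => k < s),
            ((x (Equiv.swap 0 p (τ k).succ) - t * x (Equiv.swap 0 p (τ s).succ)) /
              (x (Equiv.swap 0 p (τ k).succ) - x (Equiv.swap 0 p (τ s).succ))) := by
      intro p τ
      rw [Fin.prod_univ_succ]
      congr 1
      · -- k = 0 block
        rw [prod_filter_zero_lt]
        simp only [Equiv.Perm.decomposeFin_symm_apply_zero,
          Equiv.Perm.decomposeFin_symm_apply_succ]
        rw [Equiv.prod_comp τ (fun j => (x p - t * x (Equiv.swap 0 p j.succ)) /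
          (x p - x (Equiv.swap 0 p j.succ)))]
        exact prod_swap_succ p (fun i => (x p - t * x i) / (x p - x i))
      · -- inner blocks
        refine Finset.prod_congr rfl fun k _ => ?_
        rw [prod_filter_succ_lt]
        simp only [Equiv.Perm.decomposeFin_symm_apply_succ]
    rw [Finset.sum_congr rfl fun p _ => Finset.sum_congr rfl fun τ _ => hstep p τ]
    have hyinj : ∀ p : Fin (n+1),
        Function.Injective (fun j : Fin n => x (Equiv.swap 0 p j.succ)) :=
      fun p a b hab => Fin.succ_injective n ((Equiv.swap 0 p).injective (hinj hab))
    have hmid : ∀ p : Fin (n+1),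
        ∑ τ : Equiv.Perm (Fin n),
          (∏ i ∈ univ.erase p, ((x p - t * x i) / (x p - x i))) *
          ∏ k : Fin n, ∏ s ∈ univ.filter (fun s => k < s),
            ((x (Equiv.swap 0 p (τ k).succ) - t * x (Equiv.swap 0 p (τ s).succ)) /
              (x (Equiv.swap 0 p (τ k).succ) - x (Equiv.swap 0 p (τ s).succ)))
        = (∏ i ∈ univ.erase p, ((x p - t * x i) / (x p - x i))) *
            ∏ m ∈ Icc 1 n, ∑ j ∈ range m, t ^ j := by
      intro p
      rw [← Finset.mul_sum]
      congr 1
      exact ih (fun j => x (Equiv.swap 0 p j.succ)) (hyinj p) (fun i => h0 _)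
    rw [Finset.sum_congr rfl fun p _ => hmid p]
    rw [← Finset.sum_mul]
    rw [key_lemma t ht x hinj h0]
    rw [Finset.prod_Icc_succ_top (by omega : 1 ≤ n + 1)]
    ring


lemma sum_Icc_sub_one (r : ℕ) : ∑ m ∈ Icc 1 r, (m - 1) = r * (r - 1) / 2 := by
  induction r with
  | zero => simp
  | succ r ihr =>
    rw [Finset.sum_Icc_succ_top (by omega : 1 ≤ r + 1), ihr]
    have heven : 2 ∣ r * (r - 1) := by
      rcases r with _ | k
      · simp
      · simpa [Nat.succ_sub_one, mul_comm] using (Nat.even_mul_succ_self k).two_dvd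
    have hexp : (r + 1) * (r + 1 - 1) = r * (r - 1) + 2 * r := by
      rcases r with _ | k
      · simp
      · simp only [Nat.succ_sub_one]; ring
    omega

lemma scalar_eq (r : ℕ) :
    q17⁻¹ ^ (r * (r - 1) / 2) * qFact17 r
      = ∏ m ∈ Icc 1 r, ∑ j ∈ range m, (q17⁻¹ ^ 2) ^ j := by
  have h2 : ∀ m ∈ Icc 1 r, qInt17 m = q17 ^ (m-1) * ∑ k ∈ range m, (q17⁻¹^2) ^ k := by
    intro m hm
    have hm1 : 1 ≤ m := (mem_Icc.mp hm).1
    obtain ⟨m', rfl⟩ : ∃ m', m = m' + 1 := ⟨m - 1, by omega⟩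
    simpa using qInt_eq m'
  have hsum := sum_Icc_sub_one r
  rw [qFact17, Finset.prod_congr rfl h2, Finset.prod_mul_distrib,
    Finset.prod_pow_eq_pow_sum, hsum, ← mul_assoc, ← mul_pow,
    inv_mul_cancel₀ hq_ne, one_pow, one_mul]

lemma mapped_scalar {F' : Type*} [CommRing F'] (ψ : K17 →+* F') (r : ℕ) :
    ψ q17⁻¹ ^ (r * (r - 1) / 2) * ψ (qFact17 r)
      = ∏ m ∈ Icc 1 r, ∑ j ∈ range m, (ψ q17⁻¹ ^ 2) ^ j := by
  have h := congrArg ψ (scalar_eq r)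
  simpa only [map_mul, map_pow, map_prod, map_sum] using h


/-- ∑_{σ∈S_r} ∏_{k<s}(z_{σ(k)} - q^{-2}z_{σ(s)})(z_{σ(k)} - z_{σ(s)})
   = q^{-r(r-1)/2}[r]!_q ∏_{k<s}(z_k - z_s)^2. -/
theorem statement17 (r : ℕ) (hr : 1 ≤ r) :
    ∑ σ : Equiv.Perm (Fin r),
      ∏ k : Fin r, ∏ s ∈ Finset.univ.filter (fun s => k < s),
        ((X (σ k) - C (q17⁻¹ ^ 2) * X (σ s)) * (X (σ k) - X (σ s))) =
    C (q17⁻¹ ^ (r * (r - 1) / 2) * qFact17 r) *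
      ∏ k : Fin r, ∏ s ∈ Finset.univ.filter (fun s => k < s), (X k - X s) ^ 2 := by
  classical
  set R := MvPolynomial (Fin r) K17 with hR
  let F := FractionRing R
  let φ : R →+* F := algebraMap R F
  have hφ : Function.Injective φ := IsFractionRing.injective R F
  set t : F := φ (MvPolynomial.C (q17⁻¹ ^ 2)) with htdef
  set xx : Fin r → F := fun i => φ (MvPolynomial.X i) with hxxdef
  have hxinj : Function.Injective xx := fun i j h => MvPolynomial.X_injective (hφ h)
  have hx0 : ∀ i, xx i ≠ 0 := by
    intro i h
    exact MvPolynomial.X_ne_zero i (hφ (show φ (X i) = φ 0 by rw [map_zero]; exact h))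
  have htne : t ≠ 1 := by
    intro h
    apply ht_ne_one
    have : (MvPolynomial.C (q17⁻¹ ^ 2) : R) = MvPolynomial.C 1 := by
      apply hφ
      rw [MvPolynomial.C_1, map_one]
      exact h
    exact (MvPolynomial.C_injective _ _) this
  have hfield := field_main t htne r xx hxinj hx0
  apply hφ
  rw [map_sum, map_mul]
  -- push φ through products on both sides
  simp only [map_prod, map_mul, map_sub, map_pow]
  have htu : t = φ (MvPolynomial.C q17⁻¹) ^ 2 := by
    rw [htdef, ← map_pow, ← map_pow]
  simp only [hxxdef] at hfield
  rw [htu] at hfield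
  have hB : ∀ σ : Equiv.Perm (Fin r),
      (∏ k : Fin r, ∏ s ∈ Finset.univ.filter (fun s => k < s),
        (φ (MvPolynomial.X (σ k)) - φ (MvPolynomial.X (σ s)))) ≠ 0 := by
    intro σ
    apply Finset.prod_ne_zero_iff.mpr
    intro k _
    apply Finset.prod_ne_zero_iff.mpr
    intro s hs
    have hks : k < s := (Finset.mem_filter.mp hs).2
    refine sub_ne_zero.mpr fun h => ?_
    exact absurd (σ.injective (hxinj h)) (ne_of_lt hks)
  have hsummand : ∀ σ : Equiv.Perm (Fin r),
      (∏ k : Fin r, ∏ s ∈ Finset.univ.filter (fun s => k < s),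
        ((φ (MvPolynomial.X (σ k)) - φ (MvPolynomial.C q17⁻¹) ^ 2 * φ (MvPolynomial.X (σ s))) *
          (φ (MvPolynomial.X (σ k)) - φ (MvPolynomial.X (σ s)))))
      = (∏ k : Fin r, ∏ s ∈ Finset.univ.filter (fun s => k < s),
          ((φ (MvPolynomial.X (σ k)) - φ (MvPolynomial.C q17⁻¹) ^ 2 * φ (MvPolynomial.X (σ s))) /
            (φ (MvPolynomial.X (σ k)) - φ (MvPolynomial.X (σ s))))) *
        ∏ k : Fin r, ∏ s ∈ Finset.univ.filter (fun s => k < s),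
          (φ (MvPolynomial.X k) - φ (MvPolynomial.X s)) ^ 2 := by
    intro σ
    have hpair := prod_pairs_perm σ
      (fun a b => (φ (MvPolynomial.X a) - φ (MvPolynomial.X b)) ^ 2)
      (fun a b => by ring)
    rw [Finset.prod_congr rfl (fun k _ => Finset.prod_mul_distrib),
      Finset.prod_mul_distrib,
      Finset.prod_congr rfl (fun (k : Fin r) (_ : k ∈ Finset.univ) =>
        Finset.prod_div_distrib _ _),
      Finset.prod_div_distrib, ← hpair,
      Finset.prod_congr rfl (fun (k : Fin r) (_ : k ∈ Finset.univ) =>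
        Finset.prod_pow _ 2 _),
      Finset.prod_pow]
    have hfin : ∀ a b : F, b ≠ 0 → (a / b) * b ^ 2 = a * b := by
      intro a b hb
      rw [pow_two, ← mul_assoc, div_mul_cancel₀ a hb]
    exact (hfin _ _ (hB σ)).symm
  rw [Finset.sum_congr rfl (fun σ _ => hsummand σ), ← Finset.sum_mul, hfield]
  have hc := mapped_scalar (φ.comp (MvPolynomial.C (σ := Fin r) (R := K17))) r
  simp only [RingHom.comp_apply] at hc
  rw [← hc]
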